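/- arXiv:2405.16507 — 3 statements merged into one kernel-verified Lean document; each statement's English description precedes it below -/
import Mathlib

section
/- Let G be a directed graph on n vertices with adjacency matrix A having nonnegative real entries. Then G is acyclic if and only if Tr((I + (β/n)·A∘A)^n) = n, where β > 0 and A∘A denotes the entrywise (Hadamard) square of A. -/
namespace AcyclicTraceAux

variable {n : ℕ} (P : Matrix (Fin n) (Fin n) ℝ)

lemma pow_entry_nonneg (h0 : ∀ i j, 0 ≤ P i j) : ∀ k i j, 0 ≤ (P ^ k) i j := by
  intro k
  induction k with
  | zero => intro i j; rw [pow_zero, Matrix.one_apply]; split <;> norm_num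
  | succ k ih =>
    intro i j
    rw [pow_succ, Matrix.mul_apply]
    exact Finset.sum_nonneg fun l _ => mul_nonneg (ih i l) (h0 l j)

lemma one_le_pow_diag (h0 : ∀ i j, 0 ≤ P i j) (h1 : ∀ i, 1 ≤ P i i) :
    ∀ k i, 1 ≤ (P ^ k) i i := by
  intro k
  induction k with
  | zero => intro i; simp [Matrix.one_apply]
  | succ k ih =>
    intro i
    rw [pow_succ, Matrix.mul_apply]
    have h2 : 1 ≤ (P ^ k) i i * P i i := by nlinarith [ih i, h1 i]
    exact le_trans h2 (Finset.single_le_sum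
      (fun l _ => mul_nonneg (pow_entry_nonneg P h0 k i l) (h0 l i)) (Finset.mem_univ i))

lemma pow_entry_mono (h0 : ∀ i j, 0 ≤ P i j) (h1 : ∀ i, 1 ≤ P i i)
    {k m : ℕ} (hkm : k ≤ m) (i j : Fin n) : (P ^ k) i j ≤ (P ^ m) i j := by
  induction m, hkm using Nat.le_induction with
  | base => exact le_refl _
  | succ m hm ih =>
    refine le_trans ih ?_
    rw [pow_succ, Matrix.mul_apply]
    have h2 : (P ^ m) i j ≤ (P ^ m) i j * P j j :=
      le_mul_of_one_le_right (pow_entry_nonneg P h0 m i j) (h1 j)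
    exact le_trans h2 (Finset.single_le_sum
      (fun l _ => mul_nonneg (pow_entry_nonneg P h0 m i l) (h0 l j)) (Finset.mem_univ j))

lemma reach_pos (h0 : ∀ i j, 0 ≤ P i j) {R : Fin n → Fin n → Prop}
    (hpos : ∀ i j, R i j → 0 < P i j) {w v : Fin n}
    (h : Relation.ReflTransGen R w v) : ∃ m : ℕ, 0 < (P ^ m) w v := by
  induction h with
  | refl => exact ⟨0, by simp [Matrix.one_apply]⟩
  | @tail b c hab hbc ih =>
    obtain ⟨m, hm⟩ := ih
    refine ⟨m + 1, ?_⟩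
    rw [pow_succ, Matrix.mul_apply]
    have hterm : 0 < (P ^ m) w b * P b c := mul_pos hm (hpos _ _ hbc)
    exact lt_of_lt_of_le hterm (Finset.single_le_sum
      (fun l _ => mul_nonneg (pow_entry_nonneg P h0 m w l) (h0 l c)) (Finset.mem_univ b))

end AcyclicTraceAux

open AcyclicTraceAux in
/-- A directed graph on `n` vertices with nonnegative adjacency matrix `A`
(edge `i → j` iff `A i j > 0`) is acyclic iff
`Tr((I + (β/n) • (A ∘ A))^n) = n`, where `A ∘ A` is the Hadamard square. -/
theorem acyclic_iff_trace_eq (n : ℕ) (hn : 0 < n)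
    (A : Matrix (Fin n) (Fin n) ℝ) (hA : ∀ i j, 0 ≤ A i j)
    (β : ℝ) (hβ : 0 < β) :
    (∀ v : Fin n, ¬ Relation.TransGen (fun i j => 0 < A i j) v v) ↔
      Matrix.trace ((1 + (β / (n : ℝ)) • (Matrix.hadamard A A)) ^ n) = (n : ℝ) := by
  classical
  set R : Fin n → Fin n → Prop := fun i j => 0 < A i j with hRdef
  set c : ℝ := β / (n : ℝ) with hcdef
  have hc : 0 < c := div_pos hβ (by exact_mod_cast hn)
  set P : Matrix (Fin n) (Fin n) ℝ := 1 + c • Matrix.hadamard A A with hPdef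
  have hPapp : ∀ i j, P i j = (if i = j then (1 : ℝ) else 0) + c * (A i j * A i j) := by
    intro i j
    simp [hPdef, Matrix.add_apply, Matrix.smul_apply, Matrix.hadamard_apply,
      Matrix.one_apply, smul_eq_mul]
  have h0 : ∀ i j, 0 ≤ P i j := by
    intro i j; rw [hPapp]
    have := hA i j
    split <;> nlinarith
  have h1 : ∀ i, 1 ≤ P i i := by
    intro i; rw [hPapp, if_pos rfl]
    nlinarith [hA i i]
  have hpos : ∀ i j, R i j → 0 < P i j := by
    intro i j hij
    have hij' : 0 < A i j := hij
    have hm : 0 < c * (A i j * A i j) := mul_pos hc (mul_pos hij' hij')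
    rw [hPapp]
    split <;> linarith
  have hoff : ∀ i j, i ≠ j → 0 < P i j → R i j := by
    intro i j hne hp
    rw [hPapp, if_neg hne, zero_add] at hp
    show 0 < A i j
    by_contra h'
    have hz : A i j = 0 := le_antisymm (not_lt.mp h') (hA i j)
    rw [hz] at hp
    simp at hp
  have htr : Matrix.trace (P ^ n) = ∑ i, (P ^ n) i i := by
    simp [Matrix.trace, Matrix.diag]
  constructor
  · -- acyclic → trace = n
    intro hacyc
    have key : ∀ k : ℕ, (∀ i, (P ^ k) i i = 1) ∧
        (∀ i j, i ≠ j → 0 < (P ^ k) i j → Relation.TransGen R i j) := by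
      intro k
      induction k with
      | zero =>
        constructor
        · intro i; simp [Matrix.one_apply]
        · intro i j hne hp
          rw [pow_zero, Matrix.one_apply, if_neg hne] at hp
          exact absurd hp (lt_irrefl 0)
      | succ k ih =>
        obtain ⟨ihd, iho⟩ := ih
        have extract : ∀ i j l : Fin n, 0 < (P ^ k) i l * P l j →
            0 < (P ^ k) i l ∧ 0 < P l j := by
          intro i j l hl
          constructor
          · by_contra h'
            push_neg at h'
            nlinarith [h0 l j]
          · by_contra h'
            push_neg at h'
            nlinarith [pow_entry_nonneg P h0 k i l]
        constructor
        · intro i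
          rw [pow_succ, Matrix.mul_apply]
          have hPii : P i i = 1 := by
            rw [hPapp, if_pos rfl]
            have hnR : ¬ R i i := fun h => hacyc i (Relation.TransGen.single h)
            have hAz : A i i = 0 := le_antisymm (not_lt.mp hnR) (hA i i)
            rw [hAz]; ring
          rw [Finset.sum_eq_single i]
          · rw [ihd i, hPii, one_mul]
          · intro l _ hl
            by_contra hne0
            have hpos' : 0 < (P ^ k) i l * P l i :=
              lt_of_le_of_ne (mul_nonneg (pow_entry_nonneg P h0 k i l) (h0 l i))
                (Ne.symm hne0)
            obtain ⟨ha, hb⟩ := extract i i l hpos'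
            have htg : Relation.TransGen R i l := iho i l (Ne.symm hl) ha
            exact hacyc i (htg.tail (hoff l i hl hb))
          · intro h; exact absurd (Finset.mem_univ i) h
        · intro i j hne hp
          rw [pow_succ, Matrix.mul_apply] at hp
          have hp' : ∑ l : Fin n, (0 : ℝ) < ∑ l, (P ^ k) i l * P l j := by
            simpa using hp
          obtain ⟨l, -, hl⟩ := Finset.exists_lt_of_sum_lt hp'
          obtain ⟨ha, hb⟩ := extract i j l hl
          rcases eq_or_ne i l with h | h
          · subst h
            exact Relation.TransGen.single (hoff i j hne hb)
          · have htg : Relation.TransGen R i l := iho i l h ha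
            rcases eq_or_ne l j with h' | h'
            · subst h'; exact htg
            · exact htg.tail (hoff l j h' hb)
    rw [htr]
    calc ∑ i, (P ^ n) i i = ∑ _i : Fin n, (1 : ℝ) :=
          Finset.sum_congr rfl fun i _ => (key n).1 i
      _ = n := by simp
  · -- trace = n → acyclic
    intro htrace v hv
    -- there is some m ≥ 1 with a diagonal entry > 1
    have hQ : ∃ m : ℕ, 1 ≤ m ∧ ∃ w, 1 < (P ^ m) w w := by
      have hloop : ∀ u : Fin n, R u u → ∃ m : ℕ, 1 ≤ m ∧ ∃ w, 1 < (P ^ m) w w := by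
        intro u hu
        refine ⟨1, le_refl 1, u, ?_⟩
        rw [pow_one, hPapp, if_pos rfl]
        have hu' : 0 < A u u := hu
        have := mul_pos hc (mul_pos hu' hu')
        linarith
      obtain ⟨w, hvw, hwv⟩ := Relation.TransGen.head'_iff.mp hv
      rcases eq_or_ne w v with h | hne
      · subst h; exact hloop w hvw
      · obtain ⟨m, hm⟩ := reach_pos P h0 hpos hwv
        refine ⟨m + 1, by omega, v, ?_⟩
        rw [pow_succ', Matrix.mul_apply]
        have hpair : ∑ l ∈ ({v, w} : Finset (Fin n)), P v l * (P ^ m) l v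
            = P v v * (P ^ m) v v + P v w * (P ^ m) w v :=
          Finset.sum_pair (Ne.symm hne)
        have hle : ∑ l ∈ ({v, w} : Finset (Fin n)), P v l * (P ^ m) l v
            ≤ ∑ l, P v l * (P ^ m) l v :=
          Finset.sum_le_sum_of_subset_of_nonneg (Finset.subset_univ _)
            (fun l _ _ => mul_nonneg (h0 v l) (pow_entry_nonneg P h0 m l v))
        have h1' : 1 ≤ P v v * (P ^ m) v v := by
          nlinarith [h1 v, one_le_pow_diag P h0 h1 m v]
        have h2' : 0 < P v w * (P ^ m) w v := mul_pos (hpos v w hvw) hm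
        calc (1 : ℝ) < P v v * (P ^ m) v v + P v w * (P ^ m) w v := by linarith
          _ = _ := hpair.symm
          _ ≤ _ := hle
    -- take minimal such m
    have hmin := Nat.find_spec hQ
    set m0 := Nat.find hQ with hm0def
    obtain ⟨hm1, w0, hw0⟩ := hmin
    have hdiag1 : ∀ k, 1 ≤ k → k < m0 → ∀ w, (P ^ k) w w = 1 := by
      intro k hk1 hk w
      have hnk := Nat.find_min hQ hk
      have h' : ¬ (1 < (P ^ k) w w) := fun h => hnk ⟨hk1, w, h⟩
      exact le_antisymm (not_lt.mp h') (one_le_pow_diag P h0 h1 k w)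
    have hm0n : m0 ≤ n := by
      by_contra hgt
      push_neg at hgt
      -- pigeonhole: for each 1 ≤ i ≤ m0-1 find an intermediate vertex ≠ w0
      have hex : ∀ i : ℕ, ∃ l : Fin n, i ∈ Finset.Icc 1 (m0 - 1) →
          l ≠ w0 ∧ 0 < (P ^ i) w0 l ∧ 0 < (P ^ (m0 - i)) l w0 := by
        intro i
        by_cases hi : i ∈ Finset.Icc 1 (m0 - 1)
        · rw [Finset.mem_Icc] at hi
          have hsplit : P ^ m0 = P ^ i * P ^ (m0 - i) := by
            rw [← pow_add]; congr 1; omega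
          have hsum : 1 < ∑ l, (P ^ i) w0 l * (P ^ (m0 - i)) l w0 := by
            rw [← Matrix.mul_apply, ← hsplit]; exact hw0
          have hvterm : (P ^ i) w0 w0 * (P ^ (m0 - i)) w0 w0 = 1 := by
            rw [hdiag1 i hi.1 (by omega) w0, hdiag1 (m0 - i) (by omega) (by omega) w0]
            ring
          have hrest : ∑ l ∈ Finset.univ.erase w0, (0 : ℝ)
              < ∑ l ∈ Finset.univ.erase w0, (P ^ i) w0 l * (P ^ (m0 - i)) l w0 := by
            rw [Finset.sum_const_zero]
            have hdecomp := Finset.add_sum_erase Finset.univ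
              (fun l => (P ^ i) w0 l * (P ^ (m0 - i)) l w0) (Finset.mem_univ w0)
            replace hdecomp : (P ^ i) w0 w0 * (P ^ (m0 - i)) w0 w0
                + ∑ l ∈ Finset.univ.erase w0, (P ^ i) w0 l * (P ^ (m0 - i)) l w0
                = ∑ l, (P ^ i) w0 l * (P ^ (m0 - i)) l w0 := hdecomp
            linarith
          obtain ⟨l, hlmem, hl⟩ := Finset.exists_lt_of_sum_lt hrest
          have hlne : l ≠ w0 := (Finset.mem_erase.mp hlmem).1
          have ha : 0 < (P ^ i) w0 l := by
            by_contra h'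
            push_neg at h'
            nlinarith [pow_entry_nonneg P h0 (m0 - i) l w0]
          have hb : 0 < (P ^ (m0 - i)) l w0 := by
            by_contra h'
            push_neg at h'
            nlinarith [pow_entry_nonneg P h0 i w0 l]
          exact ⟨l, fun _ => ⟨hlne, ha, hb⟩⟩
        · exact ⟨⟨0, hn⟩, fun h => absurd h hi⟩
      choose g hg using hex
      have hcard : (Finset.univ.erase w0).card < (Finset.Icc 1 (m0 - 1)).card := by
        rw [Finset.card_erase_of_mem (Finset.mem_univ w0), Nat.card_Icc]
        simp only [Finset.card_univ, Fintype.card_fin]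
        omega
      have hmaps : ∀ i ∈ Finset.Icc 1 (m0 - 1), g i ∈ Finset.univ.erase w0 := by
        intro i hi
        exact Finset.mem_erase.mpr ⟨(hg i hi).1, Finset.mem_univ _⟩
      obtain ⟨x, hx, y, hy, hxy, hgxy⟩ :=
        Finset.exists_ne_map_eq_of_card_lt_of_maps_to hcard hmaps
      have hcontr : ∀ x y : ℕ, x ∈ Finset.Icc 1 (m0 - 1) → y ∈ Finset.Icc 1 (m0 - 1) →
          x < y → g x = g y → False := by
        intro x y hxI hyI hxylt hgeq
        obtain ⟨hlx, hax, hbx⟩ := hg x hxI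
        obtain ⟨hly, hay, hby⟩ := hg y hyI
        rw [Finset.mem_Icc] at hxI hyI
        have hby' : 0 < (P ^ (m0 - y)) (g x) w0 := by rw [hgeq]; exact hby
        set k := x + (m0 - y) with hk
        have hk1 : 1 ≤ k := by omega
        have hkm : k < m0 := by omega
        have hsum : (P ^ k) w0 w0 = ∑ l', (P ^ x) w0 l' * (P ^ (m0 - y)) l' w0 := by
          rw [hk, pow_add, Matrix.mul_apply]
        have hpair : ∑ l' ∈ ({w0, g x} : Finset (Fin n)),
              (P ^ x) w0 l' * (P ^ (m0 - y)) l' w0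
            = (P ^ x) w0 w0 * (P ^ (m0 - y)) w0 w0
              + (P ^ x) w0 (g x) * (P ^ (m0 - y)) (g x) w0 :=
          Finset.sum_pair (Ne.symm hlx)
        have hle : ∑ l' ∈ ({w0, g x} : Finset (Fin n)),
              (P ^ x) w0 l' * (P ^ (m0 - y)) l' w0
            ≤ ∑ l', (P ^ x) w0 l' * (P ^ (m0 - y)) l' w0 :=
          Finset.sum_le_sum_of_subset_of_nonneg (Finset.subset_univ _)
            (fun l' _ _ => mul_nonneg (pow_entry_nonneg P h0 x w0 l')
              (pow_entry_nonneg P h0 (m0 - y) l' w0))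
        have hd1 : (P ^ x) w0 w0 = 1 := hdiag1 x hxI.1 (by omega) w0
        have hd2 : (P ^ (m0 - y)) w0 w0 = 1 := hdiag1 (m0 - y) (by omega) (by omega) w0
        have hbig : 1 < (P ^ k) w0 w0 := by
          rw [hsum]
          have hposterm : 0 < (P ^ x) w0 (g x) * (P ^ (m0 - y)) (g x) w0 :=
            mul_pos hax hby'
          calc (1 : ℝ) < (P ^ x) w0 w0 * (P ^ (m0 - y)) w0 w0
                + (P ^ x) w0 (g x) * (P ^ (m0 - y)) (g x) w0 := by
                  rw [hd1, hd2]; linarith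
            _ = _ := hpair.symm
            _ ≤ _ := hle
        rw [hdiag1 k hk1 hkm w0] at hbig
        exact lt_irrefl 1 hbig
      rcases Nat.lt_or_ge x y with hlt | hge
      · exact hcontr x y hx hy hlt hgxy
      · exact hcontr y x hy hx (by omega) hgxy.symm
    -- conclude: trace > n, contradiction
    have hfinal : 1 < (P ^ n) w0 w0 :=
      lt_of_lt_of_le hw0 (pow_entry_mono P h0 h1 hm0n w0 w0)
    have hgt : (n : ℝ) < Matrix.trace (P ^ n) := by
      rw [htr]
      calc (n : ℝ) = ∑ _i : Fin n, (1 : ℝ) := by simp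
        _ < ∑ i, (P ^ n) i i :=
          Finset.sum_lt_sum (fun i _ => one_le_pow_diag P h0 h1 n i)
            ⟨w0, Finset.mem_univ w0, hfinal⟩
    linarith
end

section
/- Let X, Y be binary random variables in a structural causal model where Y = f(X, U) with U independent of X. Pearl's probability of necessity and sufficiency PNS = P(Y_{X=1} = 1, Y_{X=0} = 0) satisfies the bounds max(0, P(Y=1|do(X=1)) − P(Y=1|do(X=0))) ≤ PNS ≤ min(P(Y=1|do(X=1)), P(Y=0|do(X=0))). -/
open Classical in
/-- Probability of an event on a finite weighted space. -/
noncomputable def pr {Ω : Type} [Fintype Ω] (p : Ω → ℝ) (A : Ω → Prop) : ℝ :=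
  ∑ ω, if A ω then p ω else 0

open Classical in
lemma pr_nonneg {Ω : Type} [Fintype Ω] (p : Ω → ℝ) (hp : ∀ ω, 0 ≤ p ω)
    (A : Ω → Prop) : 0 ≤ pr p A := by
  apply Finset.sum_nonneg
  intro ω _
  split <;> simp [hp ω]

open Classical in
lemma pr_mono {Ω : Type} [Fintype Ω] (p : Ω → ℝ) (hp : ∀ ω, 0 ≤ p ω)
    {A B : Ω → Prop} (h : ∀ ω, A ω → B ω) : pr p A ≤ pr p B := by
  apply Finset.sum_le_sum
  intro ω _
  by_cases hA : A ω
  · simp [hA, h ω hA]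
  · simp only [hA, if_false]
    split <;> simp [hp ω]

open Classical in
lemma pr_sub {Ω : Type} [Fintype Ω] (p : Ω → ℝ) (hp : ∀ ω, 0 ≤ p ω)
    (A B : Ω → Prop) : pr p A ≤ pr p (fun ω => A ω ∧ ¬ B ω) + pr p B := by
  unfold pr
  rw [← Finset.sum_add_distrib]
  apply Finset.sum_le_sum
  intro ω _
  by_cases hA : A ω <;> by_cases hB : B ω <;> simp [hA, hB, hp ω]

/-- Pearl's bounds on the probability of necessity and sufficiency: in an SCM with
binary `X`, `Y = f(X,U)` and `U` independent of `X`,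
`max(0, P(Y=1|do(X=1)) − P(Y=1|do(X=0))) ≤ PNS ≤ min(P(Y=1|do(X=1)), P(Y=0|do(X=0)))`,
where `PNS = P(Y_{X=1} = 1, Y_{X=0} = 0)` and `P(Y=y|do(X=x)) = P(f(x,U)=y)`. -/
theorem pns_bounds {Ω N : Type} [Fintype Ω] (p : Ω → ℝ)
    (hp : ∀ ω, 0 ≤ p ω) (hsum : ∑ ω, p ω = 1)
    (U : Ω → N) (X Y : Ω → Bool) (f : Bool → N → Bool)
    (hY : ∀ ω, Y ω = f (X ω) (U ω))
    (hindep : ∀ (x : Bool) (n : N),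
      pr p (fun ω => X ω = x ∧ U ω = n) =
        pr p (fun ω => X ω = x) * pr p (fun ω => U ω = n)) :
    max 0 (pr p (fun ω => f true (U ω) = true) -
        pr p (fun ω => f false (U ω) = true)) ≤
      pr p (fun ω => f true (U ω) = true ∧ f false (U ω) = false) ∧
    pr p (fun ω => f true (U ω) = true ∧ f false (U ω) = false) ≤
      min (pr p (fun ω => f true (U ω) = true))
        (pr p (fun ω => f false (U ω) = false)) := by
  refine ⟨?_, ?_⟩
  · apply max_le
    · exact pr_nonneg p hp _
    · have h := pr_sub p hp (fun ω => f true (U ω) = true)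
        (fun ω => f false (U ω) = true)
      have heq : pr p (fun ω => f true (U ω) = true ∧ ¬ f false (U ω) = true)
          = pr p (fun ω => f true (U ω) = true ∧ f false (U ω) = false) := by
        unfold pr
        apply Finset.sum_congr rfl
        intro ω _
        congr 1
        simp
      linarith
  · apply le_min
    · exact pr_mono p hp (fun ω h => h.1)
    · exact pr_mono p hp (fun ω h => h.2)
end

section
/- Composition of two Causal CGM graphs preserves acyclicity: if G₁ is a DAG on vertex set V₁ and G₂ is a DAG on vertex set V₂, with V₁ ∩ V₂ = S, and every edge of G₁ incident to S is incoming to S while every edge of G₂ incident to S is outgoing from S, then the union graph G₁ ∪ G₂ on V₁ ∪ V₂ is a DAG. -/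
/-- Composition of two DAGs preserves acyclicity: if every edge of `G₁` touching
`S = V₁ ∩ V₂` is incoming to `S` (head in `S`, tail outside `S`) and every edge of
`G₂` touching `S` is outgoing from `S` (tail in `S`, head outside `S`), then the
union graph on `V₁ ∪ V₂` is a DAG. -/
theorem dag_composition {V : Type} [Fintype V] (V1 V2 : Set V)
    (E1 E2 : V → V → Prop)
    (hE1 : ∀ u w, E1 u w → u ∈ V1 ∧ w ∈ V1)
    (hE2 : ∀ u w, E2 u w → u ∈ V2 ∧ w ∈ V2)
    (hacyc1 : ∀ v : V, ¬ Relation.TransGen E1 v v)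
    (hacyc2 : ∀ v : V, ¬ Relation.TransGen E2 v v)
    (hint1 : ∀ u w, E1 u w → (u ∈ V1 ∩ V2 ∨ w ∈ V1 ∩ V2) →
      w ∈ V1 ∩ V2 ∧ u ∉ V1 ∩ V2)
    (hint2 : ∀ u w, E2 u w → (u ∈ V1 ∩ V2 ∨ w ∈ V1 ∩ V2) →
      u ∈ V1 ∩ V2 ∧ w ∉ V1 ∩ V2) :
    ∀ v : V, ¬ Relation.TransGen (fun u w => E1 u w ∨ E2 u w) v v := by
  -- last vertex of an E2-path is in V2
  have hend2 : ∀ u w, Relation.TransGen E2 u w → w ∈ V2 := by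
    intro u w h
    induction h with
    | single h => exact (hE2 _ _ h).2
    | tail _ h _ => exact (hE2 _ _ h).2
  -- an E1-path starting at v has a first edge from v
  have hstart1 : ∀ u w, Relation.TransGen E1 u w → ∃ y, E1 u y := by
    intro u w h
    induction h using Relation.TransGen.head_induction_on with
    | single h => exact ⟨_, h⟩
    | head h _ _ => exact ⟨_, h⟩
  -- classification of paths in the union
  have key : ∀ u w, Relation.TransGen (fun a b => E1 a b ∨ E2 a b) u w →
      Relation.TransGen E1 u w ∨ Relation.TransGen E2 u w ∨
      ∃ x, Relation.TransGen E1 u x ∧ Relation.TransGen E2 x w := by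
    intro u w h
    induction h with
    | single h =>
      rcases h with h | h
      · exact Or.inl (Relation.TransGen.single h)
      · exact Or.inr (Or.inl (Relation.TransGen.single h))
    | tail hp h ih =>
      rename_i w z
      rcases h with h | h
      · -- E1 edge w → z
        rcases ih with h1 | h2 | ⟨x, h1, h2⟩
        · exact Or.inl (h1.tail h)
        · -- w ∈ V2 (end of E2 path) and w ∈ V1 (tail of E1 edge), so w ∈ S,
          -- contradicting hint1
          have hwS : w ∈ V1 ∩ V2 := ⟨(hE1 _ _ h).1, hend2 _ _ h2⟩
          exact absurd hwS (hint1 _ _ h (Or.inl hwS)).2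
        · have hwS : w ∈ V1 ∩ V2 := ⟨(hE1 _ _ h).1, hend2 _ _ h2⟩
          exact absurd hwS (hint1 _ _ h (Or.inl hwS)).2
      · -- E2 edge w → z
        rcases ih with h1 | h2 | ⟨x, h1, h2⟩
        · exact Or.inr (Or.inr ⟨w, h1, Relation.TransGen.single h⟩)
        · exact Or.inr (Or.inl (h2.tail h))
        · exact Or.inr (Or.inr ⟨x, h1, h2.tail h⟩)
  intro v hv
  rcases key _ _ hv with h1 | h2 | ⟨x, h1, h2⟩
  · exact hacyc1 v h1
  · exact hacyc2 v h2
  · -- v is the start of an E1 path and end of an E2 path, so v ∈ S,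
    -- but then the first E1 edge out of v contradicts hint1
    obtain ⟨y, hy⟩ := hstart1 _ _ h1
    have hvS : v ∈ V1 ∩ V2 := ⟨(hE1 _ _ hy).1, hend2 _ _ h2⟩
    exact (hint1 _ _ hy (Or.inl hvS)).2 hvS
end
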